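/- arXiv:math/0607643 — 2 statements merged into one kernel-verified Lean document; each statement's English description precedes it below -/
import Mathlib

section
/- For every t ∈ [−1, 1], the point z = (1/2, it/2, 0, …, 0) ∈ ℂⁿ (n ≥ 2) satisfies |z₁|² + ⋯ + |z_n|² + |z₁² + ⋯ + z_n²| = 1/2. Consequently, the boundary of the set K_ρ = { z ∈ ℂⁿ : |z₁|² + ⋯ + |z_n|² + |z₁² + ⋯ + z_n²| ≤ 1/2 } contains the nondegenerate segment { (1/2, it/2, 0, …, 0) : t ∈ [−1, 1] }, so K_ρ is not strictly convex. -/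
open Complex Set Topology Filter

lemma sum2 {M : Type*} [AddCommMonoid M] (n : ℕ) (f : Fin (n+2) → M)
    (hf : ∀ j : Fin n, f (j.succ.succ) = 0) : ∑ j, f j = f 0 + f 1 := by
  rw [Fin.sum_univ_succ, Fin.sum_univ_succ]
  simp [hf]

lemma key (n : ℕ) (s t : ℝ) (hs : 0 ≤ s) (ht : t^2 ≤ 1) :
    ∑ j : Fin (n+2), ‖(fun j : Fin (n+2) =>
        if j = 0 then (s/2 : ℂ) else if j = 1 then Complex.I * s * t / 2 else 0) j‖ ^ 2
      + ‖∑ j : Fin (n+2), ((fun j : Fin (n+2) =>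
        if j = 0 then (s/2 : ℂ) else if j = 1 then Complex.I * s * t / 2 else 0) j) ^ 2‖
      = s^2/2 := by
  beta_reduce
  rw [sum2 n _ (by simp [Fin.succ_ne_zero, Fin.succ_succ_ne_one]),
      sum2 n _ (by simp [Fin.succ_ne_zero, Fin.succ_succ_ne_one])]
  norm_num
  have a1 : ‖(s:ℂ)/2‖ = s/2 := by
    rw [norm_div, Complex.norm_real, Real.norm_eq_abs, _root_.abs_of_nonneg hs]; simp
  have a2 : ‖Complex.I*s*t/2‖ = s*|t|/2 := by
    rw [norm_div, norm_mul, norm_mul, Complex.norm_I, Complex.norm_real, Real.norm_eq_abs,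
      Complex.norm_real, Real.norm_eq_abs, _root_.abs_of_nonneg hs]; simp
  have e : ((s:ℂ)/2)^2 + (Complex.I*s*t/2)^2 = ((s^2*(1-t^2)/4 : ℝ) : ℂ) := by
    rw [div_pow, div_pow, mul_pow, mul_pow, Complex.I_sq]
    push_cast
    ring
  rw [e, Complex.norm_real, Real.norm_eq_abs,
    _root_.abs_of_nonneg (show (0:ℝ) ≤ s^2*(1-t^2)/4 by nlinarith),
    div_pow, div_pow, mul_pow, _root_.sq_abs, _root_.sq_abs]
  ring

/-- The boundary of the Robin indicatrix
`K_ρ = {z ∈ ℂⁿ : ∑|z_j|² + |∑ z_j²| ≤ 1/2}` of the real unit ball (`n ≥ 2`)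
contains the nondegenerate segment `{(1/2, it/2, 0, …, 0) : t ∈ [−1,1]}`:
each such point satisfies `∑|z_j|² + |∑ z_j²| = 1/2` and lies on the frontier. -/
theorem robin_indicatrix_not_strictly_convex (n : ℕ) (t : ℝ) (ht : t ∈ Set.Icc (-1:ℝ) 1) :
    (∑ j : Fin (n + 2),
        ‖(fun j : Fin (n + 2) =>
          if j = 0 then (1/2 : ℂ) else if j = 1 then Complex.I * t / 2 else 0) j‖ ^ 2
      + ‖∑ j : Fin (n + 2),
          ((fun j : Fin (n + 2) =>
            if j = 0 then (1/2 : ℂ) else if j = 1 then Complex.I * t / 2 else 0) j) ^ 2‖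
      = 1/2)
    ∧ (fun j : Fin (n + 2) =>
        if j = 0 then (1/2 : ℂ) else if j = 1 then Complex.I * t / 2 else 0) ∈
      frontier {z : Fin (n + 2) → ℂ |
        ∑ j, ‖z j‖ ^ 2 + ‖∑ j, (z j) ^ 2‖ ≤ 1/2} := by
  obtain ⟨ht1, ht2⟩ := ht
  have ht' : t^2 ≤ 1 := by nlinarith
  have hfun : ∀ s : ℝ, (fun j : Fin (n+2) => (s:ℂ) * (if j = 0 then (1/2 : ℂ)
      else if j = 1 then Complex.I * t / 2 else 0)) =
      (fun j : Fin (n+2) => if j = 0 then ((s:ℂ)/2 : ℂ)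
        else if j = 1 then Complex.I * s * t / 2 else 0) := by
    intro s
    funext j
    split_ifs <;> ring
  have hpart1 : ∑ j : Fin (n + 2),
        ‖(fun j : Fin (n + 2) =>
          if j = 0 then (1/2 : ℂ) else if j = 1 then Complex.I * t / 2 else 0) j‖ ^ 2
      + ‖∑ j : Fin (n + 2),
          ((fun j : Fin (n + 2) =>
            if j = 0 then (1/2 : ℂ) else if j = 1 then Complex.I * t / 2 else 0) j) ^ 2‖
      = 1/2 := by
    have := key n 1 t zero_le_one ht'
    rw [← hfun 1] at this
    simpa using this
  refine ⟨hpart1, ?_⟩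
  set f : (Fin (n+2) → ℂ) → ℝ :=
    fun z => ∑ j, ‖z j‖ ^ 2 + ‖∑ j, (z j) ^ 2‖ with hf
  have hcont : Continuous f := by
    apply Continuous.add
    · exact continuous_finset_sum _ fun j _ =>
        (continuous_norm.comp (continuous_apply j)).pow 2
    · exact continuous_norm.comp
        (continuous_finset_sum _ fun j _ => (continuous_apply j).pow 2)
  have hSclosed : IsClosed {z : Fin (n + 2) → ℂ | f z ≤ 1/2} :=
    isClosed_le hcont continuous_const
  set z₀ : Fin (n+2) → ℂ := fun j =>
    if j = 0 then (1/2 : ℂ) else if j = 1 then Complex.I * t / 2 else 0 with hz₀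
  rw [frontier, hSclosed.closure_eq]
  constructor
  · exact le_of_eq hpart1
  · intro hmem
    set φ : ℝ → (Fin (n+2) → ℂ) := fun c => fun j => (c:ℂ) * z₀ j with hφ
    have hφcont : Continuous φ := by
      apply continuous_pi
      intro j
      exact (Complex.continuous_ofReal.mul continuous_const)
    have hφ1 : φ 1 = z₀ := by funext j; simp [hφ]
    have h2 : ∀ᶠ c in 𝓝[>] (1:ℝ), φ c ∈ interior {z : Fin (n + 2) → ℂ | f z ≤ 1/2} := by
      refine Filter.Eventually.filter_mono nhdsWithin_le_nhds ?_
      apply hφcont.continuousAt.eventually_mem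
      rw [hφ1]
      exact isOpen_interior.mem_nhds hmem
    obtain ⟨c, hcS, hc⟩ := (h2.and eventually_mem_nhdsWithin).exists
    have hcS' : f (φ c) ≤ 1/2 := by
      have := interior_subset hcS
      simpa using this
    have hc1 : (1:ℝ) < c := hc
    have : f (φ c) = c^2/2 := by
      have hkey := key n c t (by linarith) ht'
      have : φ c = (fun j : Fin (n+2) => if j = 0 then ((c:ℂ)/2 : ℂ)
          else if j = 1 then Complex.I * c * t / 2 else 0) := by
        rw [hφ]; exact hfun c
      rw [this, hf]
      exact hkey
    rw [this] at hcS'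
    nlinarith
end

section
/- The set K_ρ = { z ∈ ℂⁿ : |z₁|² + ⋯ + |z_n|² + |z₁² + ⋯ + z_n²| ≤ 1/2 } is a convex, balanced (circled) subset of ℂⁿ, i.e., it is convex and t z ∈ K_ρ whenever z ∈ K_ρ and |t| ≤ 1. -/
open Complex Finset

/-- Termwise nonnegativity / bounds for the quadratic form `Q_c`. -/
private lemma re_c_mul_le {n : ℕ} (c : ℂ) (hc : ‖c‖ ≤ 1) (v : Fin n → ℂ) :
    |(c * ∑ j, (v j) ^ 2).re| ≤ ∑ j, ‖v j‖ ^ 2 := by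
  have h1 : ‖∑ j, (v j) ^ 2‖ ≤ ∑ j, ‖v j‖ ^ 2 := by
    calc ‖∑ j, (v j) ^ 2‖ ≤ ∑ j, ‖(v j) ^ 2‖ :=
          norm_sum_le _ _
    _ = ∑ j, ‖v j‖ ^ 2 := by simp [norm_pow]
  have h2 : |(c * ∑ j, (v j) ^ 2).re| ≤ ‖c * ∑ j, (v j) ^ 2‖ :=
    Complex.abs_re_le_norm _
  have h3 : ‖c * ∑ j, (v j) ^ 2‖ ≤ ‖∑ j, (v j) ^ 2‖ := by
    rw [norm_mul]
    calc ‖c‖ * ‖∑ j, (v j) ^ 2‖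
        ≤ 1 * ‖∑ j, (v j) ^ 2‖ := by
          exact mul_le_mul_of_nonneg_right hc (norm_nonneg _)
    _ = _ := one_mul _
  linarith

private noncomputable def Phi {n : ℕ} (c : ℂ) (z w : Fin n → ℂ) : ℂ :=
  ∑ j, (z j * (starRingEnd ℂ) (w j) + c * (z j * w j))

private lemma F_eq_Phi {n : ℕ} (c : ℂ) (v : Fin n → ℂ) :
    ∑ j, ‖v j‖ ^ 2 + (c * ∑ j, (v j) ^ 2).re = (Phi c v v).re := by
  simp only [Phi, Finset.sum_add_distrib, Complex.add_re]
  congr 1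
  · rw [Complex.re_sum]
    apply Finset.sum_congr rfl
    intro j _
    rw [Complex.mul_conj, Complex.ofReal_re]
    exact Complex.sq_norm _
  · congr 1
    rw [Finset.mul_sum]
    exact Finset.sum_congr rfl fun j _ => by ring

private lemma Phi_expand {n : ℕ} (c : ℂ) (a b : ℝ) (z w : Fin n → ℂ) :
    Phi c (a • z + b • w) (a • z + b • w) =
      (a : ℂ) ^ 2 * Phi c z z + (a : ℂ) * b * (Phi c z w + Phi c w z)
        + (b : ℂ) ^ 2 * Phi c w w := by
  simp only [Phi, Finset.mul_sum, ← Finset.sum_add_distrib]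
  apply Finset.sum_congr rfl
  intro j _
  simp only [Pi.add_apply, Pi.smul_apply, Complex.real_smul, map_add, map_mul,
    Complex.conj_ofReal]
  ring

private lemma Phi_symm_re {n : ℕ} (c : ℂ) (z w : Fin n → ℂ) :
    (Phi c w z).re = (Phi c z w).re := by
  simp only [Phi, Finset.sum_add_distrib, Complex.add_re, ← Complex.re_sum]
  congr 1
  · have : ∑ j, w j * (starRingEnd ℂ) (z j)
        = (starRingEnd ℂ) (∑ j, z j * (starRingEnd ℂ) (w j)) := by
      rw [map_sum]
      apply Finset.sum_congr rfl
      intro j _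
      simp [mul_comm]
    rw [this, Complex.conj_re]
  · congr 1
    apply Finset.sum_congr rfl
    intro j _
    ring

/-- The Robin indicatrix `K_ρ = {z ∈ ℂⁿ : ∑|z_j|² + |∑ z_j²| ≤ 1/2}` of the real
unit ball is convex (as a subset of the real vector space `ℂⁿ`) and balanced. -/
theorem robin_indicatrix_convex_balanced (n : ℕ) :
    Convex ℝ {z : Fin n → ℂ |
        ∑ j, ‖z j‖ ^ 2 + ‖∑ j, (z j) ^ 2‖ ≤ 1/2}
    ∧ ∀ z ∈ {z : Fin n → ℂ |
        ∑ j, ‖z j‖ ^ 2 + ‖∑ j, (z j) ^ 2‖ ≤ 1/2},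
      ∀ t : ℂ, ‖t‖ ≤ 1 →
        t • z ∈ {z : Fin n → ℂ |
          ∑ j, ‖z j‖ ^ 2 + ‖∑ j, (z j) ^ 2‖ ≤ 1/2} := by
  constructor
  · rintro z hz w hw a b ha hb hab
    simp only [Set.mem_setOf_eq] at hz hw ⊢
    set u : Fin n → ℂ := a • z + b • w with hu
    set S : ℂ := ∑ j, (u j) ^ 2 with hS
    obtain ⟨c, hc1, hcS⟩ : ∃ c : ℂ, ‖c‖ ≤ 1 ∧ (c * S).re = ‖S‖ := by
      rcases eq_or_ne S 0 with h | h
      · exact ⟨1, by simp, by simp [h]⟩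
      · refine ⟨(starRingEnd ℂ) S / (‖S‖ : ℂ), ?_, ?_⟩
        · rw [norm_div, Complex.norm_conj, Complex.norm_real, Real.norm_eq_abs,
            _root_.abs_of_nonneg (norm_nonneg S), div_self (norm_ne_zero_iff.mpr h)]
        · have habsne : ((‖S‖ : ℝ) : ℂ) ≠ 0 := by
            simpa using h
          have hmul : (starRingEnd ℂ) S / (‖S‖ : ℂ) * S
              = ((‖S‖ : ℝ) : ℂ) := by
            rw [div_mul_eq_mul_div, mul_comm, Complex.mul_conj, Complex.normSq_eq_norm_sq]
            push_cast
            field_simp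
          rw [hmul, Complex.ofReal_re]
    -- the quadratic form F v := ∑ |v j|² + Re (c * ∑ (v j)²)
    have hFle : ∀ v : Fin n → ℂ,
        (Phi c v v).re ≤ ∑ j, ‖v j‖ ^ 2 + ‖∑ j, (v j) ^ 2‖ := by
      intro v
      rw [← F_eq_Phi]
      have h2 := abs_le.mp (re_c_mul_le c hc1 v)
      have h3 := re_c_mul_le c hc1 v
      have h4 : (c * ∑ j, (v j) ^ 2).re ≤ ‖∑ j, (v j) ^ 2‖ := by
        have := (abs_le.mp (Complex.abs_re_le_norm (c * ∑ j, (v j) ^ 2))).2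
        have hm : ‖c * ∑ j, (v j) ^ 2‖ ≤ ‖∑ j, (v j) ^ 2‖ := by
          rw [norm_mul]
          nlinarith [norm_nonneg (∑ j, (v j) ^ 2)]
        linarith
      linarith
    have hFnn : ∀ v : Fin n → ℂ, 0 ≤ (Phi c v v).re := by
      intro v
      rw [← F_eq_Phi]
      have h2 := (abs_le.mp (re_c_mul_le c hc1 v)).1
      linarith
    have hFu : ∑ j, ‖u j‖ ^ 2 + ‖∑ j, (u j) ^ 2‖
        = (Phi c u u).re := by
      rw [← F_eq_Phi, ← hS, hcS]
    -- 2 B ≤ F z + F w  from  F (z - w) ≥ 0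
    have hdiff : 0 ≤ (Phi c z z).re - 2 * (Phi c z w).re + (Phi c w w).re := by
      have h := hFnn ((1 : ℝ) • z + (-1 : ℝ) • w)
      rw [Phi_expand] at h
      have hre : ((1:ℝ) : ℂ) ^ 2 * Phi c z z + ((1:ℝ) : ℂ) * ((-1:ℝ) : ℂ) *
            (Phi c z w + Phi c w z) + ((-1:ℝ) : ℂ) ^ 2 * Phi c w w
          = Phi c z z - (Phi c z w + Phi c w z) + Phi c w w := by
        push_cast
        ring
      rw [hre] at h
      simp only [Complex.add_re, Complex.sub_re] at h
      rw [Phi_symm_re c z w] at h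
      linarith
    -- main expansion
    have hexp : (Phi c u u).re = a ^ 2 * (Phi c z z).re
        + 2 * (a * b) * (Phi c z w).re + b ^ 2 * (Phi c w w).re := by
      rw [hu, Phi_expand]
      have : ((a : ℂ) ^ 2 * Phi c z z + (a : ℂ) * b * (Phi c z w + Phi c w z)
          + (b : ℂ) ^ 2 * Phi c w w)
          = ((a ^ 2 : ℝ) : ℂ) * Phi c z z + ((a * b : ℝ) : ℂ) * (Phi c z w + Phi c w z)
          + ((b ^ 2 : ℝ) : ℂ) * Phi c w w := by push_cast; ring
      rw [this]
      simp only [Complex.add_re, Complex.re_ofReal_mul]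
      rw [Phi_symm_re c z w]
      ring
    have hQz := hFle z
    have hQw := hFle w
    have hQznn := hFnn z
    have hQwnn := hFnn w
    calc ∑ j, ‖u j‖ ^ 2 + ‖∑ j, (u j) ^ 2‖
        = (Phi c u u).re := hFu
      _ = a ^ 2 * (Phi c z z).re + 2 * (a * b) * (Phi c z w).re
          + b ^ 2 * (Phi c w w).re := hexp
      _ ≤ a ^ 2 * (Phi c z z).re + (a * b) * ((Phi c z z).re + (Phi c w w).re)
          + b ^ 2 * (Phi c w w).re := by nlinarith [mul_nonneg ha hb]
      _ = a * (Phi c z z).re + b * (Phi c w w).re := by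
          have hb1 : b = 1 - a := by linarith
          subst hb1; ring
      _ ≤ a * (1/2) + b * (1/2) := by
          have h1 : (Phi c z z).re ≤ 1/2 := le_trans hQz hz
          have h2 : (Phi c w w).re ≤ 1/2 := le_trans hQw hw
          have := mul_le_mul_of_nonneg_left h1 ha
          have := mul_le_mul_of_nonneg_left h2 hb
          linarith
      _ = 1/2 := by linarith
  · intro z hz t ht
    simp only [Set.mem_setOf_eq] at hz ⊢
    have h1 : ∀ j, ‖(t • z) j‖ ^ 2 = ‖t‖ ^ 2 * ‖z j‖ ^ 2 := by
      intro j
      simp [norm_mul, mul_pow]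
    have h2 : (∑ j, ((t • z) j) ^ 2) = t ^ 2 * ∑ j, (z j) ^ 2 := by
      simp [mul_pow, Finset.mul_sum]
    have habs : ‖t‖ ^ 2 ≤ 1 := by
      nlinarith [norm_nonneg t]
    calc ∑ j, ‖(t • z) j‖ ^ 2 + ‖∑ j, ((t • z) j) ^ 2‖
        = ‖t‖ ^ 2 * (∑ j, ‖z j‖ ^ 2 + ‖∑ j, (z j) ^ 2‖) := by
          rw [h2]
          simp only [h1, ← Finset.mul_sum, norm_mul, norm_pow]
          ring
      _ ≤ 1 * (1/2) := by
          have hnn : 0 ≤ ∑ j, ‖z j‖ ^ 2 + ‖∑ j, (z j) ^ 2‖ := by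
            have : 0 ≤ ∑ j, ‖z j‖ ^ 2 :=
              Finset.sum_nonneg fun j _ => sq_nonneg _
            have := norm_nonneg (∑ j, (z j) ^ 2)
            linarith
          calc ‖t‖ ^ 2 * (∑ j, ‖z j‖ ^ 2 + ‖∑ j, (z j) ^ 2‖)
              ≤ 1 * (∑ j, ‖z j‖ ^ 2 + ‖∑ j, (z j) ^ 2‖) :=
                mul_le_mul_of_nonneg_right habs hnn
            _ ≤ 1 * (1/2) := by linarith
      _ = 1/2 := by norm_num
end
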